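/- Let k be a positive integer and let A_n^{(k)}(x) be the 1/k-Eulerian polynomials, defined by A_0^{(k)} = A_1^{(k)} = 1 and A_{n+1}^{(k)}(x) = (1+knx)A_n^{(k)}(x) + kx(1-x)(d/dx)A_n^{(k)}(x). Then for all n ≥ 1, (kx·d/dx)^n (1-x)^{-1/k} = x^n A_n^{(k)}(1/x) · (1-x)^{-n-1/k}. -/

import Mathlib

open Polynomial Real Set Filter

/-- For the `1/k`-Eulerian polynomials defined by `A_0 = A_1 = 1` and
`A_{n+1} = (1+knx)A_n + kx(1-x)A_n'`, one has
`(kx d/dx)^n (1-x)^{-1/k} = x^n A_n(1/x) (1-x)^{-n-1/k}` on `(0,1)`. -/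
theorem kxD_pow_one_over_k_eulerian (k : ℕ) (hk : 1 ≤ k) (A : ℕ → Polynomial ℝ)
    (h0 : A 0 = 1) (h1 : A 1 = 1)
    (hrec : ∀ n : ℕ, 1 ≤ n → A (n + 1) =
        (1 + Polynomial.C ((k * n : ℕ) : ℝ) * Polynomial.X) * A n
          + Polynomial.C (k : ℝ) * Polynomial.X * (1 - Polynomial.X)
              * Polynomial.derivative (A n))
    (n : ℕ) (hn : 1 ≤ n) (x : ℝ) (hx : x ∈ Set.Ioo (0 : ℝ) 1) :
    ((fun g : ℝ → ℝ => fun y => (k : ℝ) * y * deriv g y)^[n]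
        (fun y => (1 - y) ^ (-(1 / (k : ℝ))))) x
      = x ^ n * (A n).eval (1 / x) * (1 - x) ^ (-(n : ℝ) - 1 / (k : ℝ)) := by
  have hk0 : (k : ℝ) ≠ 0 := by positivity
  induction n, hn using Nat.le_induction generalizing x with
  | base =>
    obtain ⟨hx0, hx1⟩ := hx
    have h1x : (0:ℝ) < 1 - x := by linarith
    have hd : HasDerivAt (fun y : ℝ => (1 - y) ^ (-(1/(k:ℝ))))
        ((-(1/(k:ℝ))) * (1-x) ^ ((-(1/(k:ℝ))) - 1) * (-1)) x := by
      have hlin : HasDerivAt (fun y : ℝ => 1 - y) (-1) x := by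
        simpa using (hasDerivAt_id x).const_sub 1
      exact (Real.hasDerivAt_rpow_const (Or.inl h1x.ne')).comp x hlin
    rw [Function.iterate_one]
    show (k : ℝ) * x * deriv (fun y : ℝ => (1 - y) ^ (-(1/(k:ℝ)))) x = _
    rw [hd.deriv, h1]
    simp only [Polynomial.eval_one, pow_one, Nat.cast_one]
    rw [show (-(1:ℝ) - 1/(k:ℝ)) = (-(1/(k:ℝ)) - 1) by ring]
    field_simp
  | succ n hn ih =>
    obtain ⟨hx0, hx1⟩ := hx
    have h1x : (0:ℝ) < 1 - x := by linarith
    set q : ℝ := -(n:ℝ) - 1/(k:ℝ) with hq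
    set P := A n with hP
    have hEE : (fun g : ℝ → ℝ => fun y => (k:ℝ) * y * deriv g y)^[n]
        (fun y => (1-y) ^ (-(1/(k:ℝ)))) =ᶠ[nhds x]
        (fun y => y^n * P.eval (1/y) * (1-y)^q) := by
      filter_upwards [Ioo_mem_nhds hx0 hx1] with y hy
      exact ih y hy
    rw [Function.iterate_succ_apply']
    show (k : ℝ) * x * deriv ((fun g : ℝ → ℝ => fun y => (k:ℝ) * y * deriv g y)^[n]
        (fun y => (1-y) ^ (-(1/(k:ℝ))))) x = _
    rw [hEE.deriv_eq]
    have hd1 : HasDerivAt (fun y : ℝ => y ^ n * P.eval (1/y))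
        ((n:ℝ)*x^(n-1) * P.eval (1/x) + x^n * (P.derivative.eval (1/x) * (-(x^2)⁻¹))) x := by
      have ha : HasDerivAt (fun y : ℝ => y ^ n) ((n:ℝ)*x^(n-1)) x := by
        simpa using hasDerivAt_pow n x
      have hinv : HasDerivAt (fun y : ℝ => 1/y) (-(x^2)⁻¹) x := by
        simpa [one_div] using hasDerivAt_inv hx0.ne'
      have hb : HasDerivAt (fun y : ℝ => P.eval (1/y))
          (P.derivative.eval (1/x) * (-(x^2)⁻¹)) x :=
        (P.hasDerivAt (1/x)).comp x hinv
      exact ha.mul hb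
    have hd2 : HasDerivAt (fun y : ℝ => (1-y)^q) (q*(1-x)^(q-1)*(-1)) x := by
      have hlin : HasDerivAt (fun y : ℝ => 1 - y) (-1) x := by
        simpa using (hasDerivAt_id x).const_sub 1
      exact (Real.hasDerivAt_rpow_const (Or.inl h1x.ne')).comp x hlin
    have hd : HasDerivAt (fun y : ℝ => y ^ n * P.eval (1/y) * (1-y)^q) _ x := hd1.mul hd2
    rw [hd.deriv, hrec n hn]
    have hexp : (-(↑(n+1):ℝ) - 1/(k:ℝ)) = q - 1 := by push_cast [hq]; ring
    rw [hexp]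
    have hsplit : (1-x)^q = (1-x)^(q-1)*(1-x) := by
      rw [← Real.rpow_add_one h1x.ne' (q-1)]; ring_nf
    have hxn : x^n = x * x^(n-1) := by
      rw [← pow_succ']; congr 1; omega
    simp only [Polynomial.eval_add, Polynomial.eval_mul, Polynomial.eval_one,
      Polynomial.eval_C, Polynomial.eval_X, Polynomial.eval_sub, ← hP]
    rw [hsplit, hq, hxn]
    push_cast
    field_simp
    rw [pow_succ' x n, hxn]
    ring
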